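/- Let F be a submodular function on V with F(∅) = 0 and f its Lovász extension, and for each i ∈ V let h_i : ℝ → ℝ be strictly convex and continuously differentiable with sup_{λ∈ℝ} h_i'(λ) = +∞ and inf_{λ∈ℝ} h_i'(λ) = −∞. Let x* be the unique minimizer of f(x) + Σ_{i∈V} h_i(x_i) over ℝ^V, and let T = {i ∈ V : x*_i ≥ λ̄} be a level set of x* for some λ̄ ∈ ℝ. Let y be the unique minimizer of f_T(x) + Σ_{i∈T} h_i(x_i) over ℝ^T and z the unique minimizer of f^T(x) + Σ_{i∈V∖T} h_i(x_i) over ℝ^{V∖T}, where f_T and f^T are the Lovász extensions of the restriction F_T and the contraction F^T. Then x*_j = y_j for all j ∈ T and x*_j = z_j for all j ∈ V∖T. -/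

import Mathlib

open Finset

/-- Submodularity of a set function on a finite ground set `ι`. -/
def Submodular {ι : Type} [DecidableEq ι] (F : Finset ι → ℝ) : Prop :=
  ∀ S T : Finset ι, F (S ∪ T) + F (S ∩ T) ≤ F S + F T

/-- `σ` sorts `x` in decreasing order (positions indexed by the linear order on `ι`). -/
def SortsDesc {ι : Type} [LinearOrder ι] (x : ι → ℝ) (σ : Equiv.Perm ι) : Prop :=
  ∀ j k : ι, j ≤ k → x (σ k) ≤ x (σ j)

/-- The value `Σ_k x(σ k) (F({σ j : j ≤ k}) − F({σ j : j < k}))` of the Lovász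
extension formula for a sorting permutation `σ`. -/
def lovaszVal {ι : Type} [Fintype ι] [LinearOrder ι] (F : Finset ι → ℝ) (x : ι → ℝ)
    (σ : Equiv.Perm ι) : ℝ :=
  ∑ k : ι, x (σ k) *
    (F ((Finset.univ.filter (fun j => j ≤ k)).image ⇑σ)
      - F ((Finset.univ.filter (fun j => j < k)).image ⇑σ))

/-- `f` is the Lovász extension of `F`. -/
def IsLovasz {ι : Type} [Fintype ι] [LinearOrder ι] (F : Finset ι → ℝ)
    (f : (ι → ℝ) → ℝ) : Prop :=
  ∀ (x : ι → ℝ) (σ : Equiv.Perm ι), SortsDesc x σ → f x = lovaszVal F x σ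

namespace St12

variable {ι : Type} [DecidableEq ι]

/-- Marginal sum along a list, starting from base set `B`. -/
def margSum (F : Finset ι → ℝ) (x : ι → ℝ) : Finset ι → List ι → ℝ
  | _, [] => 0
  | B, a :: L => x a * (F (insert a B) - F B) + margSum F x (insert a B) L

@[simp] lemma margSum_nil (F : Finset ι → ℝ) (x : ι → ℝ) (B : Finset ι) :
    margSum F x B [] = 0 := rfl

@[simp] lemma margSum_cons (F : Finset ι → ℝ) (x : ι → ℝ) (B : Finset ι) (a : ι) (L : List ι) :
    margSum F x B (a :: L) = x a * (F (insert a B) - F B) + margSum F x (insert a B) L := rfl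

lemma margSum_append (F : Finset ι → ℝ) (x : ι → ℝ) :
    ∀ (L₁ L₂ : List ι) (B : Finset ι),
      margSum F x B (L₁ ++ L₂) = margSum F x B L₁ + margSum F x (L₁.toFinset ∪ B) L₂
  | [], L₂, B => by simp
  | a :: L₁, L₂, B => by
    have h : L₁.toFinset ∪ insert a B = (a :: L₁).toFinset ∪ B := by
      simp [List.toFinset_cons, Finset.insert_union, Finset.union_insert]
    simp only [List.cons_append, margSum_cons, margSum_append F x L₁ L₂ (insert a B), h]
    ring

lemma margSum_congr (F : Finset ι → ℝ) {x y : ι → ℝ} :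
    ∀ (L : List ι) (B : Finset ι), (∀ i ∈ L, x i = y i) →
      margSum F x B L = margSum F y B L
  | [], B, _ => rfl
  | a :: L, B, h => by
    simp only [margSum_cons, h a (by simp),
      margSum_congr F L (insert a B) (fun i hi => h i (by simp [hi]))]

lemma margSum_linear (F : Finset ι → ℝ) (x y : ι → ℝ) (a b : ℝ) :
    ∀ (L : List ι) (B : Finset ι),
      margSum F (fun i => a * x i + b * y i) B L
        = a * margSum F x B L + b * margSum F y B L
  | [], B => by simp
  | c :: L, B => by
    simp only [margSum_cons, margSum_linear F x y a b L (insert c B)]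
    ring

lemma margSum_sum {κ : Type} (F : Finset ι → ℝ) (c : κ → ι → ℝ) (A : Finset κ) :
    ∀ (L : List ι) (B : Finset ι),
      margSum F (fun j => ∑ i ∈ A, c i j) B L = ∑ i ∈ A, margSum F (c i) B L
  | [], B => by simp
  | a :: L, B => by
    simp only [margSum_cons, margSum_sum F c A L (insert a B), Finset.sum_mul,
      ← Finset.sum_add_distrib]

lemma margSum_const_mul (F : Finset ι → ℝ) (x : ι → ℝ) (c : ℝ) :
    ∀ (L : List ι) (B : Finset ι),
      margSum F (fun i => c * x i) B L = c * margSum F x B L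
  | [], B => by simp
  | a :: L, B => by
    simp only [margSum_cons, margSum_const_mul F x c L (insert a B)]; ring

/-- diminishing returns -/
lemma submod_marginal {F : Finset ι → ℝ} (hF : Submodular F) {B S : Finset ι}
    (hBS : B ⊆ S) {a : ι} (ha : a ∉ S) :
    F (insert a S) - F S ≤ F (insert a B) - F B := by
  have := hF (insert a B) S
  have h1 : insert a B ∪ S = insert a S := by
    rw [Finset.insert_union, Finset.union_eq_right.2 hBS]
  have h2 : insert a B ∩ S = B := by
    rw [Finset.insert_inter_of_notMem ha, Finset.inter_eq_left.2 hBS]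
  rw [h1, h2] at this
  linarith

/-- indicator function of a finset -/
def chi (A : Finset ι) : ι → ℝ := fun j => if j ∈ A then 1 else 0

lemma poly_zero (F : Finset ι → ℝ) (A : Finset ι) :
    ∀ (L : List ι) (B : Finset ι), (∀ i ∈ L, i ∉ A) → margSum F (chi A) B L = 0
  | [], _, _ => rfl
  | a :: L, B, h => by
    simp only [margSum_cons, chi, if_neg (h a (by simp)),
      poly_zero F A L (insert a B) (fun i hi => h i (by simp [hi]))]
    ring

lemma poly_eq (F : Finset ι → ℝ) (A : Finset ι) :
    ∀ (L : List ι) (B : Finset ι), (∀ i ∈ L, i ∈ A) →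
      margSum F (chi A) B L = F (L.toFinset ∪ B) - F B
  | [], B, _ => by simp
  | a :: L, B, h => by
    have hrec := poly_eq F A L (insert a B) (fun i hi => h i (by simp [hi]))
    simp only [margSum_cons, chi, if_pos (h a (by simp)), hrec, List.toFinset_cons]
    have : L.toFinset ∪ insert a B = insert a L.toFinset ∪ B := by
      rw [Finset.union_insert, Finset.insert_union]
    rw [this]; ring

lemma poly_le {F : Finset ι → ℝ} (hF : Submodular F) (A : Finset ι) :
    ∀ (L : List ι) (B : Finset ι), L.Nodup → (∀ i ∈ L, i ∉ B) →
      margSum F (chi A) B L ≤ F ((A ∩ L.toFinset) ∪ B) - F B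
  | [], B, _, _ => by simp
  | a :: L, B, hnd, hdisj => by
    have hndL : L.Nodup := (List.nodup_cons.1 hnd).2
    have haL : a ∉ L := (List.nodup_cons.1 hnd).1
    have hdisj' : ∀ i ∈ L, i ∉ insert a B := by
      intro i hi
      simp only [Finset.mem_insert, not_or]
      exact ⟨fun h => haL (h ▸ hi), hdisj i (by simp [hi])⟩
    have hrec := poly_le hF A L (insert a B) hndL hdisj'
    by_cases ha : a ∈ A
    · have hset : A ∩ (a :: L).toFinset ∪ B = (A ∩ L.toFinset) ∪ insert a B := by
        rw [List.toFinset_cons, Finset.inter_insert_of_mem ha, Finset.insert_union,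
          Finset.union_insert]
      simp only [margSum_cons, chi, if_pos ha, hset]
      linarith
    · have hset : A ∩ (a :: L).toFinset = A ∩ L.toFinset := by
        rw [List.toFinset_cons, Finset.inter_insert_of_notMem ha]
      have haB : a ∉ B := hdisj a (by simp)
      have haS : a ∉ A ∩ L.toFinset ∪ B := by
        simp only [Finset.mem_union, Finset.mem_inter, not_or]
        exact ⟨fun h => ha h.1, haB⟩
      have hmarg := submod_marginal hF (Finset.subset_union_right (α := ι)) haS
      have h1 : A ∩ L.toFinset ∪ insert a B = insert a (A ∩ L.toFinset ∪ B) := by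
        rw [Finset.union_insert]
      simp only [margSum_cons, chi, if_neg ha, hset]
      rw [h1] at hrec
      linarith

end St12

namespace St12

variable {ι : Type} [DecidableEq ι]

lemma getD_eq_get (L : List ι) (d : ι) (k : ℕ) (h : k < L.length) :
    L.getD k d = L.get ⟨k, h⟩ := by
  simp [List.getD_eq_getElem?_getD, List.getElem?_eq_getElem h]

lemma getD_mem (L : List ι) (d : ι) (k : ℕ) (h : k < L.length) : L.getD k d ∈ L := by
  rw [getD_eq_get L d k h]; exact List.get_mem L ⟨k, h⟩

lemma take_toFinset_succ (d : ι) :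
    ∀ (L : List ι) (k : ℕ), k < L.length →
      (L.take (k+1)).toFinset = insert (L.getD k d) (L.take k).toFinset
  | a :: L, 0, _ => by simp
  | a :: L, k+1, h => by
    have hk : k < L.length := by simpa using h
    simp only [List.take_succ_cons, List.toFinset_cons, List.getD_cons_succ,
      take_toFinset_succ d L k hk, Finset.insert_comm]

lemma getD_not_mem_take (d : ι) :
    ∀ (L : List ι), L.Nodup → ∀ (k : ℕ), k < L.length →
      L.getD k d ∉ (L.take k).toFinset
  | a :: L, _, 0, _ => by simp
  | a :: L, hnd, k+1, h => by
    have hk : k < L.length := by simpa using h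
    have hrec := getD_not_mem_take d L (List.nodup_cons.1 hnd).2 k hk
    simp only [List.take_succ_cons, List.toFinset_cons, List.getD_cons_succ,
      Finset.mem_insert, not_or]
    refine ⟨fun hEq => (List.nodup_cons.1 hnd).1 ?_, hrec⟩
    rw [← hEq]; exact getD_mem L d k hk

lemma chi_eq_sum (A : Finset ι) (j : ι) : chi A j = ∑ i ∈ A, chi {i} j := by
  simp only [chi, Finset.mem_singleton]
  rw [Finset.sum_ite_eq A j (fun _ => (1:ℝ))]

lemma S_eq_sum (F : Finset ι → ℝ) (A : Finset ι) (L : List ι) (B : Finset ι) :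
    margSum F (chi A) B L = ∑ i ∈ A, margSum F (chi {i}) B L := by
  rw [margSum_congr F L B (fun i _ => chi_eq_sum A i), margSum_sum]

lemma sum_toFinset_eq_range (d : ι) (ψ : ι → ℝ) :
    ∀ (L : List ι), L.Nodup →
      ∑ i ∈ L.toFinset, ψ i = ∑ k ∈ Finset.range L.length, ψ (L.getD k d)
  | [], _ => by simp
  | a :: L, hnd => by
    rw [List.toFinset_cons, Finset.sum_insert (by
      simpa using (List.nodup_cons.1 hnd).1),
      sum_toFinset_eq_range d ψ L (List.nodup_cons.1 hnd).2]
    rw [List.length_cons, Finset.sum_range_succ']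
    simp only [List.getD_cons_succ, List.getD_cons_zero]
    exact add_comm _ _

lemma margSum_eq_sum_single (F : Finset ι → ℝ) (x : ι → ℝ) (L : List ι) (B : Finset ι) :
    margSum F x B L = ∑ i ∈ L.toFinset, x i * margSum F (chi {i}) B L := by
  have h1 : margSum F x B L
      = margSum F (fun j => ∑ i ∈ L.toFinset, x i * chi {i} j) B L := by
    apply margSum_congr
    intro j hj
    have : ∀ i ∈ L.toFinset, x i * chi {i} j = if j = i then x i else 0 := by
      intro i _
      simp only [chi, Finset.mem_singleton]
      by_cases h : j = i <;> simp [h]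
    rw [Finset.sum_congr rfl this, Finset.sum_ite_eq L.toFinset j x,
      if_pos (List.mem_toFinset.2 hj)]
  rw [h1, margSum_sum]
  exact Finset.sum_congr rfl fun i _ => margSum_const_mul F (chi {i}) (x i) L B

lemma maxLemma {F : Finset ι → ℝ} (hF : Submodular F) (x : ι → ℝ)
    (L L₀ : List ι) (hLn : L.Nodup) (hL₀n : L₀.Nodup)
    (hset : L.toFinset = L₀.toFinset)
    (hsort : L₀.Pairwise (fun a b => x b ≤ x a)) :
    margSum F x ∅ L ≤ margSum F x ∅ L₀ := by
  by_cases hL0 : L₀ = []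
  · subst hL0
    have : L = [] := by
      rw [← List.toFinset_eq_empty_iff]; simpa using hset
    subst this; simp
  obtain ⟨d, -⟩ := List.exists_mem_of_ne_nil L₀ hL0
  set m := L₀.length with hm
  set P : ℕ → Finset ι := fun k => (L₀.take k).toFinset with hP
  set SA : Finset ι → ℝ := fun A => margSum F (chi A) ∅ L with hSA
  set SB : Finset ι → ℝ := fun A => margSum F (chi A) ∅ L₀ with hSB
  set v : ℕ → ℝ := fun k => x (L₀.getD k d) with hv
  set D : ℕ → ℝ := fun k => SA (P k) - SB (P k) with hD
  -- formulas
  have hstep : ∀ (LL : List ι), LL.Nodup → LL.toFinset = L₀.toFinset →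
      margSum F x ∅ LL = ∑ k ∈ Finset.range m, v k *
        ((fun A => margSum F (chi A) ∅ LL) (P (k+1))
          - (fun A => margSum F (chi A) ∅ LL) (P k)) := by
    intro LL hn hs
    rw [margSum_eq_sum_single F x LL ∅, hs, sum_toFinset_eq_range d _ L₀ hL₀n]
    apply Finset.sum_congr rfl
    intro k hk
    have hkm : k < m := Finset.mem_range.1 hk
    have hins : P (k+1) = insert (L₀.getD k d) (P k) := take_toFinset_succ d L₀ k hkm
    have hnotmem : L₀.getD k d ∉ P k := getD_not_mem_take d L₀ hL₀n k hkm
    have e1 : margSum F (chi (P (k+1))) ∅ LL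
        = margSum F (chi {L₀.getD k d}) ∅ LL + margSum F (chi (P k)) ∅ LL := by
      rw [hins, S_eq_sum F (insert (L₀.getD k d) (P k)) LL ∅, Finset.sum_insert hnotmem,
        ← S_eq_sum F (P k) LL ∅]
    show x (L₀.getD k d) * margSum F (chi {L₀.getD k d}) ∅ LL
      = x (L₀.getD k d) * (margSum F (chi (P (k+1))) ∅ LL - margSum F (chi (P k)) ∅ LL)
    rw [e1]; ring
  have hA := hstep L hLn hset
  have hB := hstep L₀ hL₀n rfl
  have hAB : margSum F x ∅ L - margSum F x ∅ L₀
      = ∑ k ∈ Finset.range m, v k * (D (k+1) - D k) := by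
    rw [hA, hB, ← Finset.sum_sub_distrib]
    apply Finset.sum_congr rfl
    intro k _
    simp only [hD]; ring
  have hD0 : D 0 = 0 := by
    have : P 0 = ∅ := by simp [hP]
    simp only [hD, this, hSA, hSB]
    rw [poly_zero F ∅ L ∅ (by simp), poly_zero F ∅ L₀ ∅ (by simp)]
    ring
  have hDm : D m = 0 := by
    have hPm : P m = L₀.toFinset := by simp [hP, hm]
    have h1 : SA (P m) = F (L.toFinset ∪ ∅) - F ∅ := by
      rw [hSA, hPm]
      exact poly_eq F L₀.toFinset L ∅ (fun i hi => hset ▸ List.mem_toFinset.2 hi)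
    have h2 : SB (P m) = F (L₀.toFinset ∪ ∅) - F ∅ := by
      rw [hSB, hPm]
      exact poly_eq F L₀.toFinset L₀ ∅ (fun i hi => List.mem_toFinset.2 hi)
    show SA (P m) - SB (P m) = 0
    rw [h1, h2, hset]; ring
  have hDle : ∀ k, D k ≤ 0 := by
    intro k
    have hPsub : P k ⊆ L.toFinset := by
      intro i hi
      rw [hset]
      exact List.mem_toFinset.2 (List.take_subset k L₀ (List.mem_toFinset.1 hi))
    have h1 : SA (P k) ≤ F (P k ∪ ∅) - F ∅ := by
      have := poly_le hF (P k) L ∅ hLn (by simp)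
      rwa [Finset.inter_eq_left.2 hPsub] at this
    have h2 : SB (P k) = F (P k ∪ ∅) - F ∅ := by
      have hsplit := List.take_append_drop k L₀
      have hnd2 : (L₀.take k ++ L₀.drop k).Nodup := by rw [hsplit]; exact hL₀n
      have hdisj := List.disjoint_of_nodup_append hnd2
      show margSum F (chi (P k)) ∅ L₀ = F (P k ∪ ∅) - F ∅
      conv_lhs => rw [← hsplit]
      rw [margSum_append, poly_eq F (P k) (L₀.take k) ∅
        (fun i hi => List.mem_toFinset.2 hi),
        poly_zero F (P k) (L₀.drop k) _
        (fun i hi hmem => hdisj (List.mem_toFinset.1 hmem) hi)]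
      ring
    show SA (P k) - SB (P k) ≤ 0
    rw [h2]; linarith
  have hvmono : ∀ k, k + 1 < m → v (k+1) ≤ v k := by
    intro k hk1
    have hk : k < m := Nat.lt_of_succ_lt hk1
    show x (L₀.getD (k+1) d) ≤ x (L₀.getD k d)
    rw [getD_eq_get L₀ d k hk, getD_eq_get L₀ d (k+1) hk1]
    exact hsort.rel_get_of_lt (by simp)
  -- Abel summation
  have key : ∑ k ∈ Finset.range m, v k * (D (k+1) - D k) ≤ 0 := by
    have habel := Finset.sum_range_by_parts (M := ℝ) v (fun k => D (k+1) - D k) m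
    have hG : ∀ n : ℕ, ∑ i ∈ Finset.range n, (D (i+1) - D i) = D n := by
      intro n
      rw [Finset.sum_range_sub D n, hD0, sub_zero]
    simp only [smul_eq_mul, hG] at habel
    rw [habel, hDm, mul_zero, zero_sub, neg_le, neg_zero]
    apply Finset.sum_nonneg
    intro i hi
    have hi1 : i + 1 < m := by
      have := Finset.mem_range.1 hi
      omega
    have := hvmono i hi1
    have := hDle (i+1)
    nlinarith
  linarith [hAB, key]

end St12

lemma decEq_irrel {ι : Type} (i1 i2 : DecidableEq ι) : i1 = i2 := by
  funext a b
  exact Subsingleton.elim _ _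

lemma union_irrel {α : Type} (i1 i2 : DecidableEq α) (s t : Finset α) :
    @Union.union _ (@Finset.instUnion _ i1) s t = @Union.union _ (@Finset.instUnion _ i2) s t := by
  rw [decEq_irrel i1 i2]

lemma submodular_irrel {ι : Type} (i1 i2 : DecidableEq ι) (F : Finset ι → ℝ)
    (h : @Submodular ι i1 F) : @Submodular ι i2 F := by
  rw [decEq_irrel i2 i1]; exact h

namespace St12

section Sorting

variable {ι : Type} [Fintype ι] [LinearOrder ι]

/-- Sorting relation: decreasing in `x`, ties broken by the order on `ι`. -/
def rS (x : ι → ℝ) (a b : ι) : Prop := x b < x a ∨ (x a = x b ∧ a ≤ b)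

noncomputable instance (x : ι → ℝ) : DecidableRel (rS x) := fun _ _ => by unfold rS; infer_instance

instance (x : ι → ℝ) : IsTrans ι (rS x) := ⟨by
  rintro a b c (hab | ⟨hab1, hab2⟩) (hbc | ⟨hbc1, hbc2⟩)
  · exact Or.inl (hbc.trans hab)
  · exact Or.inl (hbc1 ▸ hab)
  · exact Or.inl (hab1 ▸ hbc)
  · exact Or.inr ⟨hab1.trans hbc1, hab2.trans hbc2⟩⟩

instance (x : ι → ℝ) : IsAntisymm ι (rS x) := ⟨by
  rintro a b (hab | ⟨hab1, hab2⟩) (hba | ⟨hba1, hba2⟩)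
  · exact absurd (hab.trans hba) (lt_irrefl _)
  · exact absurd hab (hba1 ▸ lt_irrefl _)
  · exact absurd hba (hab1 ▸ lt_irrefl _)
  · exact le_antisymm hab2 hba2⟩

instance (x : ι → ℝ) : IsTotal ι (rS x) := ⟨by
  intro a b
  rcases lt_trichotomy (x a) (x b) with h | h | h
  · exact Or.inr (Or.inl h)
  · rcases le_total a b with h2 | h2
    · exact Or.inl (Or.inr ⟨h, h2⟩)
    · exact Or.inr (Or.inr ⟨h.symm, h2⟩)
  · exact Or.inl (Or.inl h)⟩

/-- An enumeration of `ι` sorted decreasingly w.r.t. `x`. -/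
noncomputable def sortedEnum (x : ι → ℝ) : List ι := Finset.univ.sort (rS x)

lemma sortedEnum_nodup (x : ι → ℝ) : (sortedEnum x).Nodup := Finset.sort_nodup _ _

lemma sortedEnum_toFinset (x : ι → ℝ) : (sortedEnum x).toFinset = Finset.univ :=
  Finset.sort_toFinset _ _

lemma sortedEnum_sorted (x : ι → ℝ) :
    (sortedEnum x).Pairwise (fun a b => x b ≤ x a) := by
  have h := Finset.pairwise_sort (r := rS x) (s := Finset.univ)
  exact h.imp (by rintro a b (h | ⟨h1, _⟩); exacts [h.le, h1.ge])

lemma margSum_eq_take_sum (F : Finset ι → ℝ) (x : ι → ℝ) :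
    ∀ (L : List ι) (B : Finset ι),
      margSum F x B L = ∑ a : Fin L.length, x (L.get a) *
        (F ((L.take ((a : ℕ)+1)).toFinset ∪ B) - F ((L.take (a : ℕ)).toFinset ∪ B))
  | [], B => by simp
  | c :: L, B => by
    rw [margSum_cons, margSum_eq_take_sum F x L (insert c B)]
    simp only [List.length_cons]
    rw [Fin.sum_univ_succ]
    have hcomm : ∀ S : Finset ι, insert c S ∪ B = S ∪ insert c B := by
      intro S; rw [Finset.insert_union, Finset.union_insert]
    congr 1
    · simp [← Finset.insert_eq]
    · apply Finset.sum_congr rfl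
      intro a _
      simp [List.take_succ_cons, hcomm]

lemma isLovasz_eq_margSum {F : Finset ι → ℝ} {f : (ι → ℝ) → ℝ} (hf : IsLovasz F f)
    (x : ι → ℝ) (L : List ι) (hn : L.Nodup) (hu : L.toFinset = Finset.univ)
    (hsort : L.Pairwise (fun a b => x b ≤ x a)) :
    f x = margSum F x ∅ L := by
  have hlen : Fintype.card ι = L.length := by
    rw [← List.toFinset_card_of_nodup hn, hu, Finset.card_univ]
  let e : Fin L.length ≃o ι := monoEquivOfFin ι hlen
  have hinj : Function.Injective (fun k : Fin L.length => L.get k) :=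
    fun a b hab => (List.Nodup.get_inj_iff hn).1 hab
  let g : Fin L.length ≃ ι := Equiv.ofBijective _
    ((Fintype.bijective_iff_injective_and_card _).2 ⟨hinj, by simp [hlen]⟩)
  let σ : Equiv.Perm ι := e.symm.toEquiv.trans g
  have hσ : ∀ i, σ i = L.get (e.symm i) := fun _ => rfl
  have hsd : SortsDesc x σ := by
    intro j k hjk
    have h2 : e.symm j ≤ e.symm k := e.symm.monotone hjk
    rcases eq_or_lt_of_le h2 with hEq | hlt
    · exact le_of_eq (by rw [hσ j, hσ k, hEq])
    · exact hsort.rel_get_of_lt hlt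
  have hmemtake : ∀ (c : ℕ) (i : ι),
      (i ∈ (L.take c).toFinset ↔ ∃ a : Fin L.length, (a : ℕ) < c ∧ L.get a = i) := by
    intro c i
    rw [List.mem_toFinset, List.mem_take_iff_getElem]
    constructor
    · rintro ⟨idx, hidx, rfl⟩
      exact ⟨⟨idx, (lt_min_iff.1 hidx).2⟩, (lt_min_iff.1 hidx).1, rfl⟩
    · rintro ⟨a, hac, rfl⟩
      exact ⟨(a : ℕ), lt_min_iff.2 ⟨hac, a.isLt⟩, by simp⟩
  have hfilter_le : ∀ k : ι, (Finset.univ.filter (fun j => j ≤ k)).image σ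
      = (L.take ((e.symm k : ℕ)+1)).toFinset := by
    intro k
    ext i
    rw [Finset.mem_image, hmemtake]
    constructor
    · rintro ⟨j, hj, rfl⟩
      have hjk : j ≤ k := (Finset.mem_filter.1 hj).2
      have : e.symm j ≤ e.symm k := e.symm.monotone hjk
      exact ⟨e.symm j, Nat.lt_succ_of_le (Fin.le_def.1 this), (hσ j).symm⟩
    · rintro ⟨a, ha, rfl⟩
      refine ⟨e a, Finset.mem_filter.2 ⟨Finset.mem_univ _, ?_⟩, ?_⟩
      · have hak : a ≤ e.symm k := Fin.le_def.2 (Nat.lt_succ_iff.1 ha)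
        have := e.monotone hak
        rwa [OrderIso.apply_symm_apply] at this
      · rw [hσ, OrderIso.symm_apply_apply]
  have hfilter_lt : ∀ k : ι, (Finset.univ.filter (fun j => j < k)).image σ
      = (L.take ((e.symm k : ℕ))).toFinset := by
    intro k
    ext i
    rw [Finset.mem_image, hmemtake]
    constructor
    · rintro ⟨j, hj, rfl⟩
      have hjk : j < k := (Finset.mem_filter.1 hj).2
      have : e.symm j < e.symm k := e.symm.strictMono hjk
      exact ⟨e.symm j, this, (hσ j).symm⟩
    · rintro ⟨a, ha, rfl⟩
      refine ⟨e a, Finset.mem_filter.2 ⟨Finset.mem_univ _, ?_⟩, ?_⟩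
      · have hak : a < e.symm k := Fin.lt_def.2 ha
        have := e.strictMono hak
        rwa [OrderIso.apply_symm_apply] at this
      · rw [hσ, OrderIso.symm_apply_apply]
  rw [hf x σ hsd, margSum_eq_take_sum F x L ∅]
  unfold lovaszVal
  exact Fintype.sum_equiv e.toEquiv.symm _ _ (fun k => by
    rw [hfilter_le k, hfilter_lt k, hσ k, Finset.union_empty, Finset.union_empty]
    rfl)

lemma lovasz_convex {F : Finset ι → ℝ} {f : (ι → ℝ) → ℝ} (hF : Submodular F)
    (hf : IsLovasz F f) (x y : ι → ℝ) (a b : ℝ) (ha : 0 ≤ a) (hb : 0 ≤ b) :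
    f (fun i => a * x i + b * y i) ≤ a * f x + b * f y := by
  set z : ι → ℝ := fun i => a * x i + b * y i with hz
  have h1 : f z = margSum F z ∅ (sortedEnum z) :=
    isLovasz_eq_margSum hf z _ (sortedEnum_nodup z) (sortedEnum_toFinset z)
      (sortedEnum_sorted z)
  have h2 : f x = margSum F x ∅ (sortedEnum x) :=
    isLovasz_eq_margSum hf x _ (sortedEnum_nodup x) (sortedEnum_toFinset x)
      (sortedEnum_sorted x)
  have h3 : f y = margSum F y ∅ (sortedEnum y) :=
    isLovasz_eq_margSum hf y _ (sortedEnum_nodup y) (sortedEnum_toFinset y)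
      (sortedEnum_sorted y)
  have hlin : margSum F z ∅ (sortedEnum z)
      = a * margSum F x ∅ (sortedEnum z) + b * margSum F y ∅ (sortedEnum z) :=
    margSum_linear F x y a b _ _
  have hmx : margSum F x ∅ (sortedEnum z) ≤ margSum F x ∅ (sortedEnum x) :=
    maxLemma hF x _ _ (sortedEnum_nodup z) (sortedEnum_nodup x)
      (by rw [sortedEnum_toFinset, sortedEnum_toFinset]) (sortedEnum_sorted x)
  have hmy : margSum F y ∅ (sortedEnum z) ≤ margSum F y ∅ (sortedEnum y) :=
    maxLemma hF y _ _ (sortedEnum_nodup z) (sortedEnum_nodup y)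
      (by rw [sortedEnum_toFinset, sortedEnum_toFinset]) (sortedEnum_sorted y)
  rw [h1, h2, h3, hlin]
  have := mul_le_mul_of_nonneg_left hmx ha
  have := mul_le_mul_of_nonneg_left hmy hb
  linarith

end Sorting

end St12

namespace St12

lemma margSum_map {ι κ : Type} [DecidableEq ι] [DecidableEq κ]
    (F : Finset ι → ℝ) (g : κ ↪ ι) (C : Finset ι) (x : ι → ℝ) :
    ∀ (L : List κ) (B : Finset κ),
      margSum (fun S => F (S.map g ∪ C) - F C) (fun a => x (g a)) B L
        = margSum F x (B.map g ∪ C) (L.map g)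
  | [], _ => rfl
  | a :: L, B => by
    have h1 : (insert a B).map g = insert (g a) (B.map g) := Finset.map_insert g a B
    have h2 : insert (g a) (B.map g) ∪ C = insert (g a) (B.map g ∪ C) :=
      Finset.insert_union _ _ _
    simp only [List.map_cons, margSum_cons, margSum_map F g C x L (insert a B), h1, h2]
    ring_nf

section Decomp

variable {ι : Type} [Fintype ι] [LinearOrder ι]

lemma decomp (F : Finset ι → ℝ) (hF0 : F ∅ = 0)
    (T U : Finset ι) (hU : ∀ i, i ∈ U ↔ i ∉ T)
    {f : (ι → ℝ) → ℝ}
    {fT : ({i : ι // i ∈ T} → ℝ) → ℝ} {fC : ({i : ι // i ∈ U} → ℝ) → ℝ}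
    {GC : Finset {i : ι // i ∈ U} → ℝ}
    (hGC : ∀ S : Finset {i : ι // i ∈ U},
      GC S = F (S.map (Function.Embedding.subtype _) ∪ T) - F T)
    (hf : IsLovasz F f)
    (hfT : IsLovasz (fun S : Finset {i : ι // i ∈ T} =>
      F (S.map (Function.Embedding.subtype _))) fT)
    (hfC : IsLovasz GC fC)
    (x : ι → ℝ) (hsep : ∀ i ∈ T, ∀ j ∈ U, x j ≤ x i) :
    f x = fT (fun i => x i.val) + fC (fun i => x i.val) := by
  rw [show GC = (fun S : Finset {i : ι // i ∈ U} =>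
    F (S.map (Function.Embedding.subtype _) ∪ T) - F T) from funext hGC] at hfC
  set embT : {i : ι // i ∈ T} ↪ ι := Function.Embedding.subtype _ with hembT
  set embC : {i : ι // i ∈ U} ↪ ι := Function.Embedding.subtype _ with hembC
  set xT : {i : ι // i ∈ T} → ℝ := fun i => x i.val with hxT
  set xC : {i : ι // i ∈ U} → ℝ := fun i => x i.val with hxC
  set LT := sortedEnum xT with hLT
  set LC := sortedEnum xC with hLC
  set L : List ι := LT.map embT ++ LC.map embC with hL
  -- membership facts
  have hmemT : ∀ i ∈ LT.map embT, i ∈ T := by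
    intro i hi
    obtain ⟨a, -, rfl⟩ := List.mem_map.1 hi
    exact a.2
  have hmemC : ∀ i ∈ LC.map embC, i ∈ U := by
    intro i hi
    obtain ⟨a, -, rfl⟩ := List.mem_map.1 hi
    exact a.2
  -- nodup
  have hndT : (LT.map embT).Nodup :=
    (sortedEnum_nodup xT).map embT.injective
  have hndC : (LC.map embC).Nodup :=
    (sortedEnum_nodup xC).map embC.injective
  have hnd : L.Nodup := by
    rw [hL, List.nodup_append]
    exact ⟨hndT, hndC, fun a ha b hb hab => (hU a).1 (by subst hab; exact hmemC _ hb) (hmemT a ha)⟩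
  -- toFinset facts
  have hallT : ∀ a : {i : ι // i ∈ T}, a ∈ LT := fun a => by
    rw [hLT, sortedEnum, Finset.mem_sort]
    exact Finset.mem_univ a
  have hallC : ∀ a : {i : ι // i ∈ U}, a ∈ LC := fun a => by
    rw [hLC, sortedEnum, Finset.mem_sort]
    exact Finset.mem_univ a
  have htfT : (LT.map embT).toFinset = T := by
    ext i
    simp only [List.mem_toFinset, List.mem_map]
    constructor
    · rintro ⟨a, -, rfl⟩; exact a.2
    · intro hi; exact ⟨⟨i, hi⟩, hallT _, rfl⟩
  have htfC : (LC.map embC).toFinset = U := by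
    ext i
    simp only [List.mem_toFinset, List.mem_map]
    constructor
    · rintro ⟨a, -, rfl⟩; exact a.2
    · intro hi; exact ⟨⟨i, hi⟩, hallC _, rfl⟩
  have htf : L.toFinset = Finset.univ := by
    rw [hL, List.toFinset_append, htfT, htfC]
    ext i
    simp only [Finset.mem_union, Finset.mem_univ, iff_true]
    by_cases hi : i ∈ T
    · exact Or.inl hi
    · exact Or.inr ((hU i).2 hi)
  -- sorted
  have hsorted : L.Pairwise (fun a b => x b ≤ x a) := by
    rw [hL, List.pairwise_append]
    refine ⟨?_, ?_, ?_⟩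
    · rw [List.pairwise_map]
      exact sortedEnum_sorted xT
    · rw [List.pairwise_map]
      exact sortedEnum_sorted xC
    · intro a ha b hb
      exact hsep a (hmemT a ha) b (hmemC b hb)
  -- main computation
  have hmain : f x = margSum F x ∅ L := isLovasz_eq_margSum hf x L hnd htf hsorted
  rw [hmain, hL, margSum_append]
  have hbase : (LT.map embT).toFinset ∪ ∅ = (∅ : Finset {i : ι // i ∈ U}).map embC ∪ T := by
    rw [htfT, Finset.union_empty, Finset.map_empty, Finset.empty_union]
  have hpiece2 : margSum F x ((LT.map embT).toFinset ∪ ∅) (LC.map embC) = fC xC := by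
    rw [hbase, ← margSum_map F embC T x LC ∅]
    exact (isLovasz_eq_margSum hfC xC LC (sortedEnum_nodup xC) (sortedEnum_toFinset xC)
      (sortedEnum_sorted xC)).symm
  have hpiece1 : margSum F x ∅ (LT.map embT) = fT xT := by
    have hemp : (∅ : Finset ι) = (∅ : Finset {i : ι // i ∈ T}).map embT ∪ ∅ := by
      rw [Finset.map_empty, Finset.empty_union]
    rw [hemp, ← margSum_map F embT ∅ x LT ∅]
    have hfun : (fun S : Finset {i : ι // i ∈ T} => F (S.map embT ∪ ∅) - F ∅)
        = (fun S : Finset {i : ι // i ∈ T} => F (S.map embT)) := by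
      funext S
      rw [Finset.union_empty, hF0, sub_zero]
    rw [hfun]
    exact (isLovasz_eq_margSum hfT xT LT (sortedEnum_nodup xT) (sortedEnum_toFinset xT)
      (sortedEnum_sorted xT)).symm
  rw [hpiece1, hpiece2]

end Decomp

end St12

namespace St12

lemma sum_conv_le {κ : Type} [Fintype κ] (φ : κ → ℝ → ℝ)
    (hconv : ∀ i : κ, ConvexOn ℝ (Set.univ : Set ℝ) (φ i))
    (u v : κ → ℝ) {a b : ℝ} (ha : 0 ≤ a) (hb : 0 ≤ b) (hab : a + b = 1) :
    ∑ i, φ i (a * u i + b * v i) ≤ a * ∑ i, φ i (u i) + b * ∑ i, φ i (v i) := by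
  rw [Finset.mul_sum, Finset.mul_sum, ← Finset.sum_add_distrib]
  apply Finset.sum_le_sum
  intro i _
  simpa using (hconv i).2 (Set.mem_univ (u i)) (Set.mem_univ (v i)) ha hb hab

lemma sum_conv_lt {κ : Type} [Fintype κ] (φ : κ → ℝ → ℝ)
    (hconv : ∀ i : κ, StrictConvexOn ℝ (Set.univ : Set ℝ) (φ i))
    (u v : κ → ℝ) (hne : u ≠ v) {a b : ℝ} (ha : 0 < a) (hb : 0 < b) (hab : a + b = 1) :
    ∑ i, φ i (a * u i + b * v i) < a * ∑ i, φ i (u i) + b * ∑ i, φ i (v i) := by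
  rw [Finset.mul_sum, Finset.mul_sum, ← Finset.sum_add_distrib]
  obtain ⟨i0, hi0⟩ := Function.ne_iff.1 hne
  apply Finset.sum_lt_sum
  · intro i _
    simpa using (hconv i).convexOn.2 (Set.mem_univ (u i)) (Set.mem_univ (v i)) ha.le hb.le hab
  · exact ⟨i0, Finset.mem_univ _, by
      simpa using (hconv i0).2 (Set.mem_univ (u i0)) (Set.mem_univ (v i0)) hi0 ha hb hab⟩

end St12

/-- Proposition: splits: let `x*` be the unique minimizer of
`f(x) + Σ_i h_i(x_i)`, and `T = {i : x*_i ≥ λ̄}` a level set of `x*`.  If `y`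
minimizes the proximal problem for the restriction `F_T` on `ℝ^T` and `z`
minimizes the proximal problem for the contraction `F^T` on `ℝ^{V∖T}`, then
`x*` agrees with `y` on `T` and with `z` on `V∖T`. -/
theorem statement12 {n : ℕ} (F : Finset (Fin n) → ℝ) (hF0 : F ∅ = 0) (hF : Submodular F)
    (f : (Fin n → ℝ) → ℝ) (hf : IsLovasz F f)
    (h h' : Fin n → ℝ → ℝ)
    (hconv : ∀ i, StrictConvexOn ℝ (Set.univ : Set ℝ) (h i))
    (hderiv : ∀ i t, HasDerivAt (h i) (h' i t) t)
    (hcont : ∀ i, Continuous (h' i))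
    (hsupTop : ∀ i M, ∃ t, M ≤ h' i t)
    (hinfBot : ∀ i M, ∃ t, h' i t ≤ M)
    (xstar : Fin n → ℝ)
    (hxstar : ∀ x : Fin n → ℝ, f xstar + ∑ i, h i (xstar i) ≤ f x + ∑ i, h i (x i))
    (lam : ℝ) (T : Finset (Fin n))
    (hT : T = Finset.univ.filter (fun i => lam ≤ xstar i))
    (fT : ({i : Fin n // i ∈ T} → ℝ) → ℝ)
    (hfT : IsLovasz (fun S : Finset {i : Fin n // i ∈ T} =>
      F (S.map (Function.Embedding.subtype _))) fT)
    (fC : ({i : Fin n // i ∈ Tᶜ} → ℝ) → ℝ)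
    (hfC : IsLovasz (fun S : Finset {i : Fin n // i ∈ Tᶜ} =>
      F (S.map (Function.Embedding.subtype _) ∪ T) - F T) fC)
    (y : {i : Fin n // i ∈ T} → ℝ)
    (hy : ∀ w : {i : Fin n // i ∈ T} → ℝ,
      fT y + ∑ i, h i.val (y i) ≤ fT w + ∑ i, h i.val (w i))
    (z : {i : Fin n // i ∈ Tᶜ} → ℝ)
    (hz : ∀ w : {i : Fin n // i ∈ Tᶜ} → ℝ,
      fC z + ∑ i, h i.val (z i) ≤ fC w + ∑ i, h i.val (w i)) :
    (∀ j : {i : Fin n // i ∈ T}, xstar j.val = y j) ∧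
    (∀ j : {i : Fin n // i ∈ Tᶜ}, xstar j.val = z j) := by
  open St12 in
  -- membership facts
  have hU : ∀ i : Fin n, i ∈ Tᶜ ↔ i ∉ T := fun i => Finset.mem_compl
  have hTmem : ∀ i : Fin n, i ∈ T → lam ≤ xstar i := by
    intro i hi; rw [hT] at hi; exact (Finset.mem_filter.1 hi).2
  have hCmem : ∀ j : Fin n, j ∈ Tᶜ → xstar j < lam := by
    intro j hj
    have h1 : j ∉ T := Finset.mem_compl.1 hj
    rw [hT] at h1
    simp only [Finset.mem_filter, Finset.mem_univ, true_and, not_le] at h1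
    exact h1
  -- submodularity of restriction and contraction
  have hFT : Submodular (fun S : Finset {i : Fin n // i ∈ T} =>
      F (S.map (Function.Embedding.subtype _))) := by
    intro S1 S2
    dsimp only
    rw [Finset.map_union, Finset.map_inter]
    exact hF _ _
  have hFC : Submodular (fun S : Finset {i : Fin n // i ∈ Tᶜ} =>
      F (S.map (Function.Embedding.subtype _) ∪ T) - F T) := by
    intro S1 S2
    dsimp only
    have key := hF (S1.map (Function.Embedding.subtype _) ∪ T)
      (S2.map (Function.Embedding.subtype _) ∪ T)
    have e1 : (S1 ∪ S2).map (Function.Embedding.subtype _) ∪ T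
        = (S1.map (Function.Embedding.subtype _) ∪ T)
          ∪ (S2.map (Function.Embedding.subtype _) ∪ T) := by
      rw [Finset.map_union]
      ext i
      simp only [Finset.mem_union]
      tauto
    have e2 : (S1 ∩ S2).map (Function.Embedding.subtype _) ∪ T
        = (S1.map (Function.Embedding.subtype _) ∪ T)
          ∩ (S2.map (Function.Embedding.subtype _) ∪ T) := by
      rw [Finset.map_inter]
      ext i
      simp only [Finset.mem_union, Finset.mem_inter]
      tauto
    rw [e1, e2]
    linarith
  -- sum splitting helper
  have hsplit : ∀ ψ : Fin n → ℝ, ∑ i, ψ i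
      = (∑ i : {i : Fin n // i ∈ T}, ψ i.val) + (∑ i : {i : Fin n // i ∈ Tᶜ}, ψ i.val) := by
    intro ψ
    rw [← Finset.sum_add_sum_compl T ψ]
    congr 1
    · exact (Finset.sum_subtype T (fun x => Iff.rfl) ψ)
    · exact (Finset.sum_subtype Tᶜ (fun x => Iff.rfl) ψ)
  -- Step A for T side
  have stepA_T : ∀ w : {i : Fin n // i ∈ T} → ℝ,
      (∀ (i : {i : Fin n // i ∈ T}) (j : Fin n), j ∈ Tᶜ → xstar j ≤ w i) →
      fT (fun i => xstar i.val) + ∑ i : {i : Fin n // i ∈ T}, h i.val (xstar i.val)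
        ≤ fT w + ∑ i : {i : Fin n // i ∈ T}, h i.val (w i) := by
    intro w hw
    set xw : Fin n → ℝ := fun i => if hi : i ∈ T then w ⟨i, hi⟩ else xstar i with hxw
    have hwT : ∀ i : {i : Fin n // i ∈ T}, xw i.val = w i := fun i => dif_pos i.2
    have hwC : ∀ j : {i : Fin n // i ∈ Tᶜ}, xw j.val = xstar j.val :=
      fun j => dif_neg ((hU j.val).1 j.2)
    have hdx : f xstar = fT (fun i => xstar i.val) + fC (fun i => xstar i.val) :=
      St12.decomp F hF0 T Tᶜ hU (fun S => congrArg (fun A => F A - F T) (union_irrel _ _ _ _)) hf hfT hfC xstar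
        (fun i hi j hj => le_trans (hCmem j hj).le (hTmem i hi))
    have hdw : f xw = fT (fun i => xw i.val) + fC (fun i => xw i.val) :=
      St12.decomp F hF0 T Tᶜ hU (fun S => congrArg (fun A => F A - F T) (union_irrel _ _ _ _)) hf hfT hfC xw (fun i hi j hj => by
        rw [show xw j = xstar j from dif_neg ((hU j).1 hj),
          show xw i = w ⟨i, hi⟩ from dif_pos hi]
        exact hw ⟨i, hi⟩ j hj)
    have hargT : (fun i : {i : Fin n // i ∈ T} => xw i.val) = w := funext hwT
    have hargC : (fun i : {i : Fin n // i ∈ Tᶜ} => xw i.val)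
        = (fun i : {i : Fin n // i ∈ Tᶜ} => xstar i.val) := funext hwC
    rw [hargT, hargC] at hdw
    have hsx := hsplit (fun i => h i (xstar i))
    have hsw := hsplit (fun i => h i (xw i))
    have hsw2 : (∑ i : {i : Fin n // i ∈ T}, h i.val (xw i.val))
        = ∑ i : {i : Fin n // i ∈ T}, h i.val (w i) := by
      apply Finset.sum_congr rfl; intro i _; rw [hwT i]
    have hsw3 : (∑ i : {i : Fin n // i ∈ Tᶜ}, h i.val (xw i.val))
        = ∑ i : {i : Fin n // i ∈ Tᶜ}, h i.val (xstar i.val) := by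
      apply Finset.sum_congr rfl; intro i _; rw [hwC i]
    have hmin := hxstar xw
    rw [hdx, hdw, hsx, hsw, hsw2, hsw3] at hmin
    linarith
  -- Step A for complement side
  have stepA_C : ∀ v : {i : Fin n // i ∈ Tᶜ} → ℝ,
      (∀ (j : {i : Fin n // i ∈ Tᶜ}) (i : Fin n), i ∈ T → v j ≤ xstar i) →
      fC (fun i => xstar i.val) + ∑ i : {i : Fin n // i ∈ Tᶜ}, h i.val (xstar i.val)
        ≤ fC v + ∑ i : {i : Fin n // i ∈ Tᶜ}, h i.val (v i) := by
    intro v hv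
    set xv : Fin n → ℝ := fun i => if hi : i ∈ Tᶜ then v ⟨i, hi⟩ else xstar i with hxv
    have hvC : ∀ j : {i : Fin n // i ∈ Tᶜ}, xv j.val = v j := fun j => dif_pos j.2
    have hvT : ∀ i : {i : Fin n // i ∈ T}, xv i.val = xstar i.val :=
      fun i => dif_neg (fun hc => (hU i.val).1 hc i.2)
    have hdx : f xstar = fT (fun i => xstar i.val) + fC (fun i => xstar i.val) :=
      St12.decomp F hF0 T Tᶜ hU (fun S => congrArg (fun A => F A - F T) (union_irrel _ _ _ _)) hf hfT hfC xstar
        (fun i hi j hj => le_trans (hCmem j hj).le (hTmem i hi))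
    have hdv : f xv = fT (fun i => xv i.val) + fC (fun i => xv i.val) :=
      St12.decomp F hF0 T Tᶜ hU (fun S => congrArg (fun A => F A - F T) (union_irrel _ _ _ _)) hf hfT hfC xv (fun i hi j hj => by
        rw [show xv j = v ⟨j, hj⟩ from dif_pos hj,
          show xv i = xstar i from dif_neg (fun hc => (hU i).1 hc hi)]
        exact hv ⟨j, hj⟩ i hi)
    have hargT : (fun i : {i : Fin n // i ∈ T} => xv i.val)
        = (fun i : {i : Fin n // i ∈ T} => xstar i.val) := funext hvT
    have hargC : (fun i : {i : Fin n // i ∈ Tᶜ} => xv i.val) = v := funext hvC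
    rw [hargT, hargC] at hdv
    have hsx := hsplit (fun i => h i (xstar i))
    have hsv := hsplit (fun i => h i (xv i))
    have hsv2 : (∑ i : {i : Fin n // i ∈ T}, h i.val (xv i.val))
        = ∑ i : {i : Fin n // i ∈ T}, h i.val (xstar i.val) := by
      apply Finset.sum_congr rfl; intro i _; rw [hvT i]
    have hsv3 : (∑ i : {i : Fin n // i ∈ Tᶜ}, h i.val (xv i.val))
        = ∑ i : {i : Fin n // i ∈ Tᶜ}, h i.val (v i) := by
      apply Finset.sum_congr rfl; intro i _; rw [hvC i]
    have hmin := hxstar xv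
    rw [hdx, hdv, hsx, hsv, hsv2, hsv3] at hmin
    linarith
  -- bound below lam on the complement
  have hmu : ∃ mu, mu < lam ∧ ∀ j ∈ Tᶜ, xstar j ≤ mu := by
    by_cases hne : (Tᶜ : Finset (Fin n)).Nonempty
    · refine ⟨Tᶜ.sup' hne xstar, ?_, fun j hj => Finset.le_sup' xstar hj⟩
      exact (Finset.sup'_lt_iff hne).2 (fun j hj => hCmem j hj)
    · exact ⟨lam - 1, by linarith, fun j hj => absurd ⟨j, hj⟩ hne⟩
  obtain ⟨mu, hmu1, hmu2⟩ := hmu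
  -- Step B for T side: unconstrained minimality
  have stepB_T : ∀ w : {i : Fin n // i ∈ T} → ℝ,
      fT (fun i => xstar i.val) + ∑ i : {i : Fin n // i ∈ T}, h i.val (xstar i.val)
        ≤ fT w + ∑ i : {i : Fin n // i ∈ T}, h i.val (w i) := by
    intro w
    by_contra hcon
    push_neg at hcon
    set M : ℝ := ∑ i : {i : Fin n // i ∈ T}, |w i - xstar i.val| with hM
    have hM0 : 0 ≤ M := Finset.sum_nonneg (fun i _ => abs_nonneg _)
    set ε : ℝ := min 1 ((lam - mu)/(M+1)) with hε
    have hε0 : 0 < ε := lt_min one_pos (div_pos (by linarith) (by linarith))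
    have hε1 : ε ≤ 1 := min_le_left _ _
    have hεM : ε * (M+1) ≤ lam - mu := by
      have h1 : ε ≤ (lam - mu)/(M+1) := min_le_right _ _
      calc ε * (M+1) ≤ ((lam - mu)/(M+1)) * (M+1) :=
            mul_le_mul_of_nonneg_right h1 (by linarith)
        _ = lam - mu := div_mul_cancel₀ _ (by linarith)
    set wε : {i : Fin n // i ∈ T} → ℝ :=
      fun i => (1-ε) * xstar i.val + ε * w i with hwε
    have hwεcond : ∀ (i : {i : Fin n // i ∈ T}) (j : Fin n), j ∈ Tᶜ → xstar j ≤ wε i := by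
      intro i j hj
      have h1 : |w i - xstar i.val| ≤ M :=
        Finset.single_le_sum (f := fun i : {i : Fin n // i ∈ T} => |w i - xstar i.val|)
          (fun i _ => abs_nonneg _) (Finset.mem_univ i)
      have h2 : -(|w i - xstar i.val|) ≤ w i - xstar i.val := neg_abs_le _
      have h3 : lam ≤ xstar i.val := hTmem i.val i.2
      have h4 : xstar j ≤ mu := hmu2 j hj
      have h5 : wε i = xstar i.val + ε * (w i - xstar i.val) := by rw [hwε]; ring
      nlinarith
    have hA := stepA_T wε hwεcond
    have hc1 : fT wε ≤ (1-ε) * fT (fun i => xstar i.val) + ε * fT w := by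
      have := St12.lovasz_convex (submodular_irrel _ _ _ hFT) hfT
        (fun i => xstar i.val) w (1-ε) ε (by linarith) hε0.le
      exact this
    have hc2 : ∑ i : {i : Fin n // i ∈ T}, h i.val (wε i)
        ≤ (1-ε) * ∑ i : {i : Fin n // i ∈ T}, h i.val (xstar i.val)
          + ε * ∑ i : {i : Fin n // i ∈ T}, h i.val (w i) := by
      have := St12.sum_conv_le (fun i : {i : Fin n // i ∈ T} => h i.val)
        (fun i => (hconv i.val).convexOn) (fun i => xstar i.val) w
        (a := 1-ε) (b := ε) (by linarith) hε0.le (by ring)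
      exact this
    nlinarith
  -- Step B for complement side
  have stepB_C : ∀ v : {i : Fin n // i ∈ Tᶜ} → ℝ,
      fC (fun i => xstar i.val) + ∑ i : {i : Fin n // i ∈ Tᶜ}, h i.val (xstar i.val)
        ≤ fC v + ∑ i : {i : Fin n // i ∈ Tᶜ}, h i.val (v i) := by
    intro v
    by_contra hcon
    push_neg at hcon
    set M : ℝ := ∑ i : {i : Fin n // i ∈ Tᶜ}, |v i - xstar i.val| with hM
    have hM0 : 0 ≤ M := Finset.sum_nonneg (fun i _ => abs_nonneg _)
    set ε : ℝ := min 1 ((lam - mu)/(M+1)) with hε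
    have hε0 : 0 < ε := lt_min one_pos (div_pos (by linarith) (by linarith))
    have hε1 : ε ≤ 1 := min_le_left _ _
    have hεM : ε * (M+1) ≤ lam - mu := by
      have h1 : ε ≤ (lam - mu)/(M+1) := min_le_right _ _
      calc ε * (M+1) ≤ ((lam - mu)/(M+1)) * (M+1) :=
            mul_le_mul_of_nonneg_right h1 (by linarith)
        _ = lam - mu := div_mul_cancel₀ _ (by linarith)
    set vε : {i : Fin n // i ∈ Tᶜ} → ℝ :=
      fun i => (1-ε) * xstar i.val + ε * v i with hvε
    have hvεcond : ∀ (j : {i : Fin n // i ∈ Tᶜ}) (i : Fin n), i ∈ T → vε j ≤ xstar i := by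
      intro j i hi
      have h1 : |v j - xstar j.val| ≤ M :=
        Finset.single_le_sum (f := fun i : {i : Fin n // i ∈ Tᶜ} => |v i - xstar i.val|)
          (fun i _ => abs_nonneg _) (Finset.mem_univ j)
      have h2 : v j - xstar j.val ≤ |v j - xstar j.val| := le_abs_self _
      have h3 : xstar j.val ≤ mu := hmu2 j.val j.2
      have h4 : lam ≤ xstar i := hTmem i hi
      have h5 : vε j = xstar j.val + ε * (v j - xstar j.val) := by rw [hvε]; ring
      nlinarith
    have hA := stepA_C vε hvεcond
    have hc1 : fC vε ≤ (1-ε) * fC (fun i => xstar i.val) + ε * fC v := by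
      exact St12.lovasz_convex (submodular_irrel _ _ _ hFC) hfC
        (fun i => xstar i.val) v (1-ε) ε (by linarith) hε0.le
    have hc2 : ∑ i : {i : Fin n // i ∈ Tᶜ}, h i.val (vε i)
        ≤ (1-ε) * ∑ i : {i : Fin n // i ∈ Tᶜ}, h i.val (xstar i.val)
          + ε * ∑ i : {i : Fin n // i ∈ Tᶜ}, h i.val (v i) := by
      exact St12.sum_conv_le (fun i : {i : Fin n // i ∈ Tᶜ} => h i.val)
        (fun i => (hconv i.val).convexOn) (fun i => xstar i.val) v
        (a := 1-ε) (b := ε) (by linarith) hε0.le (by ring)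
    nlinarith
  -- uniqueness on T
  have hyT : (fun i : {i : Fin n // i ∈ T} => xstar i.val) = y := by
    by_contra hne
    have h1 := hy (fun i => xstar i.val)
    have h2 := stepB_T y
    set mid : {i : Fin n // i ∈ T} → ℝ :=
      fun i => (1/2 : ℝ) * xstar i.val + (1/2 : ℝ) * y i with hmid
    have h3 : fT mid ≤ (1/2) * fT (fun i => xstar i.val) + (1/2) * fT y :=
      St12.lovasz_convex (submodular_irrel _ _ _ hFT) hfT
        (fun i => xstar i.val) y (1/2) (1/2) (by norm_num) (by norm_num)
    have h4 : ∑ i : {i : Fin n // i ∈ T}, h i.val (mid i)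
        < (1/2) * ∑ i : {i : Fin n // i ∈ T}, h i.val (xstar i.val)
          + (1/2) * ∑ i : {i : Fin n // i ∈ T}, h i.val (y i) :=
      St12.sum_conv_lt (fun i : {i : Fin n // i ∈ T} => h i.val)
        (fun i => hconv i.val) (fun i => xstar i.val) y hne
        (by norm_num) (by norm_num) (by norm_num)
    have h5 := stepB_T mid
    linarith
  have hzC : (fun i : {i : Fin n // i ∈ Tᶜ} => xstar i.val) = z := by
    by_contra hne
    have h1 := hz (fun i => xstar i.val)
    have h2 := stepB_C z
    set mid : {i : Fin n // i ∈ Tᶜ} → ℝ :=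
      fun i => (1/2 : ℝ) * xstar i.val + (1/2 : ℝ) * z i with hmid
    have h3 : fC mid ≤ (1/2) * fC (fun i => xstar i.val) + (1/2) * fC z :=
      St12.lovasz_convex (submodular_irrel _ _ _ hFC) hfC
        (fun i => xstar i.val) z (1/2) (1/2) (by norm_num) (by norm_num)
    have h4 : ∑ i : {i : Fin n // i ∈ Tᶜ}, h i.val (mid i)
        < (1/2) * ∑ i : {i : Fin n // i ∈ Tᶜ}, h i.val (xstar i.val)
          + (1/2) * ∑ i : {i : Fin n // i ∈ Tᶜ}, h i.val (z i) :=
      St12.sum_conv_lt (fun i : {i : Fin n // i ∈ Tᶜ} => h i.val)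
        (fun i => hconv i.val) (fun i => xstar i.val) z hne
        (by norm_num) (by norm_num) (by norm_num)
    have h5 := stepB_C mid
    linarith
  exact ⟨fun j => congrFun hyT j, fun j => congrFun hzC j⟩
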